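/- Let p > 0 and l(x) = e^{−px} − 1. Let Z = dQ/dP and suppose E^P[ Z |log Z| ] < ∞, and let α > −1 (so that α > lim_{x→+∞} l(x) = −1). Let S_1 be Q-integrable. Then the infimum of E^Q[M] over all Q-integrable random variables M such that e^{−p(M − S_1)} is P-integrable and E^P[ e^{−p(M−S_1)} − 1 ] ≤ α equals E^Q[S_1] − (1/p) log(1 + α) − (1/p) E^P[ Z log Z ]. -/

import Mathlib

open MeasureTheory Filter
open scoped MeasureTheory NNReal ENNReal

lemma transfer_integral {Ω : Type*} {m0 : MeasurableSpace Ω} {P Q : Measure Ω} {Z : Ω → ℝ}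
    (hZmeas : Measurable Z) (hZpos : ∀ᵐ ω ∂P, 0 < Z ω)
    (hZ : P.withDensity (fun ω => ENNReal.ofReal (Z ω)) = Q) (f : Ω → ℝ) :
    ∫ ω, f ω ∂Q = ∫ ω, Z ω * f ω ∂P := by
  have h1 : (fun ω => ENNReal.ofReal (Z ω)) = (fun ω => ((Real.toNNReal (Z ω) : ℝ≥0) : ℝ≥0∞)) := rfl
  rw [← hZ, h1, integral_withDensity_eq_integral_smul (hZmeas.real_toNNReal)]
  refine integral_congr_ae ?_
  filter_upwards [hZpos] with ω hω
  simp [NNReal.smul_def, Real.coe_toNNReal _ hω.le]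

lemma transfer_integrable {Ω : Type*} {m0 : MeasurableSpace Ω} {P Q : Measure Ω} {Z : Ω → ℝ}
    (hZmeas : Measurable Z) (hZpos : ∀ᵐ ω ∂P, 0 < Z ω)
    (hZ : P.withDensity (fun ω => ENNReal.ofReal (Z ω)) = Q) (f : Ω → ℝ) :
    Integrable f Q ↔ Integrable (fun ω => Z ω * f ω) P := by
  have h1 : (fun ω => ENNReal.ofReal (Z ω)) = (fun ω => ((Real.toNNReal (Z ω) : ℝ≥0) : ℝ≥0∞)) := rfl
  rw [← hZ, h1, integrable_withDensity_iff_integrable_smul (hZmeas.real_toNNReal)]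
  refine integrable_congr ?_
  filter_upwards [hZpos] with ω hω
  simp [NNReal.smul_def, Real.coe_toNNReal _ hω.le]

lemma young_ineq {z t y : ℝ} (hz : 0 < z) (ht : 0 < t) :
    z * y ≤ t * Real.exp y + z * Real.log z - z * Real.log t - z := by
  have h := Real.add_one_le_exp (y - Real.log z + Real.log t)
  have h2 : z * (y - Real.log z + Real.log t + 1) ≤ z * Real.exp (y - Real.log z + Real.log t) :=
    mul_le_mul_of_nonneg_left h hz.le
  have h3 : z * Real.exp (y - Real.log z + Real.log t) = t * Real.exp y := by
    rw [show y - Real.log z + Real.log t = y + Real.log t - Real.log z by ring,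
      Real.exp_sub, Real.exp_add, Real.exp_log ht, Real.exp_log hz]
    field_simp
  nlinarith [h2, h3]

/-- Exponential-loss case with one constraint: with `l(x) = e^{-px} - 1`,
`Z = dQ/dP` with finite relative entropy, and `α > -1`, the minimal cost
`inf { E^Q[M] : E^P[e^{-p(M-S₁)} - 1] ≤ α }` equals
`E^Q[S₁] - (1/p) log(1+α) - (1/p) E^P[Z log Z]`. -/
theorem stmt_12
    {Ω : Type*} {m0 : MeasurableSpace Ω} (P Q : Measure Ω)
    [IsProbabilityMeasure P] [IsProbabilityMeasure Q]
    (hPQ : P ≪ Q) (hQP : Q ≪ P)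
    (Z : Ω → ℝ) (hZmeas : Measurable Z) (hZpos : ∀ᵐ ω ∂P, 0 < Z ω)
    (hZ : P.withDensity (fun ω => ENNReal.ofReal (Z ω)) = Q)
    (hent : Integrable (fun ω => Z ω * |Real.log (Z ω)|) P)
    (p : ℝ) (hp : 0 < p) (α : ℝ) (hα : -1 < α)
    (S₁ : Ω → ℝ) (hS₁ : Integrable S₁ Q) :
    sInf {x : ℝ | ∃ M : Ω → ℝ, Integrable M Q ∧
        Integrable (fun ω => Real.exp (-p * (M ω - S₁ ω))) P ∧
        (∫ ω, (Real.exp (-p * (M ω - S₁ ω)) - 1) ∂P) ≤ α ∧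
        x = ∫ ω, M ω ∂Q}
      = (∫ ω, S₁ ω ∂Q) - (1 / p) * Real.log (1 + α)
          - (1 / p) * ∫ ω, Z ω * Real.log (Z ω) ∂P := by
  have hα1 : (0:ℝ) < 1 + α := by linarith
  set H : ℝ := ∫ ω, Z ω * Real.log (Z ω) ∂P with hH
  set target : ℝ := (∫ ω, S₁ ω ∂Q) - (1 / p) * Real.log (1 + α) - (1 / p) * H with htarget
  -- basic integrability facts
  have hZint : Integrable Z P := by
    have := (transfer_integrable hZmeas hZpos hZ (fun _ => (1:ℝ))).mp (integrable_const 1)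
    simpa using this
  have hZone : ∫ ω, Z ω ∂P = 1 := by
    have := transfer_integral hZmeas hZpos hZ (fun _ => (1:ℝ))
    simpa using this.symm
  have hZlogint : Integrable (fun ω => Z ω * Real.log (Z ω)) P := by
    refine hent.mono' ((hZmeas.mul (Real.measurable_log.comp hZmeas)).aestronglyMeasurable) ?_
    filter_upwards [hZpos] with ω hω
    rw [Real.norm_eq_abs, abs_mul, abs_of_pos hω]
  have hlogQ : Integrable (fun ω => Real.log (Z ω)) Q :=
    (transfer_integrable hZmeas hZpos hZ _).mpr hZlogint
  have hlogQ_eq : ∫ ω, Real.log (Z ω) ∂Q = H :=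
    transfer_integral hZmeas hZpos hZ _
  -- the optimal M₀
  set M₀ : Ω → ℝ := fun ω => S₁ ω - (1/p) * (Real.log (Z ω) + Real.log (1+α)) with hM₀
  have hexp_eq : (fun ω => Real.exp (-p * (M₀ ω - S₁ ω))) =ᵐ[P] fun ω => (1+α) * Z ω := by
    filter_upwards [hZpos] with ω hω
    have harg : -p * (M₀ ω - S₁ ω) = Real.log (Z ω) + Real.log (1+α) := by
      simp only [hM₀]
      field_simp
      ring
    rw [harg, Real.exp_add, Real.exp_log hω, Real.exp_log hα1]
    ring
  have hexp0 : Integrable (fun ω => Real.exp (-p * (M₀ ω - S₁ ω))) P :=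
    (hZint.const_mul (1+α)).congr hexp_eq.symm
  have hexpint : ∫ ω, Real.exp (-p * (M₀ ω - S₁ ω)) ∂P = 1 + α := by
    rw [integral_congr_ae hexp_eq, integral_const_mul, hZone, mul_one]
  have hM₀int : Integrable M₀ Q :=
    hS₁.sub (((hlogQ.add (integrable_const _)).const_mul (1/p)))
  have hM₀val : ∫ ω, M₀ ω ∂Q = target := by
    have hg : Integrable (fun ω => (1/p) * (Real.log (Z ω) + Real.log (1+α))) Q :=
      (hlogQ.add (integrable_const _)).const_mul (1/p)
    simp only [hM₀]
    rw [integral_sub hS₁ hg, integral_const_mul, integral_add hlogQ (integrable_const _),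
      integral_const, probReal_univ, hlogQ_eq]
    simp only [htarget]
    simp
    ring
  have hmem : target ∈ {x : ℝ | ∃ M : Ω → ℝ, Integrable M Q ∧
      Integrable (fun ω => Real.exp (-p * (M ω - S₁ ω))) P ∧
      (∫ ω, (Real.exp (-p * (M ω - S₁ ω)) - 1) ∂P) ≤ α ∧
      x = ∫ ω, M ω ∂Q} := by
    refine ⟨M₀, hM₀int, hexp0, ?_, hM₀val.symm⟩
    rw [integral_sub hexp0 (integrable_const 1), hexpint, integral_const, probReal_univ]
    simp
  -- lower bound
  have hlb : ∀ x ∈ {x : ℝ | ∃ M : Ω → ℝ, Integrable M Q ∧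
      Integrable (fun ω => Real.exp (-p * (M ω - S₁ ω))) P ∧
      (∫ ω, (Real.exp (-p * (M ω - S₁ ω)) - 1) ∂P) ≤ α ∧
      x = ∫ ω, M ω ∂Q}, target ≤ x := by
    rintro x ⟨M, hMint, hexp, hcon, rfl⟩
    set t : ℝ := 1/(1+α) with htdef
    have ht : 0 < t := by positivity
    have hlogt : Real.log t = -Real.log (1+α) := by
      rw [htdef, one_div, Real.log_inv]
    have hyQ : Integrable (fun ω => -p * (M ω - S₁ ω)) Q := (hMint.sub hS₁).const_mul (-p)
    have hyP : Integrable (fun ω => Z ω * (-p * (M ω - S₁ ω))) P :=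
      (transfer_integrable hZmeas hZpos hZ _).mp hyQ
    have hrhs : Integrable (fun ω => t * Real.exp (-p * (M ω - S₁ ω)) + Z ω * Real.log (Z ω)
        - Z ω * Real.log t - Z ω) P :=
      (((hexp.const_mul t).add hZlogint).sub (hZint.mul_const _)).sub hZint
    have hptwise : ∀ᵐ ω ∂P, Z ω * (-p * (M ω - S₁ ω)) ≤
        t * Real.exp (-p * (M ω - S₁ ω)) + Z ω * Real.log (Z ω) - Z ω * Real.log t - Z ω := by
      filter_upwards [hZpos] with ω hω
      exact young_ineq hω ht
    have hint_le := integral_mono_ae hyP hrhs hptwise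
    have hlhs_eq : ∫ ω, Z ω * (-p * (M ω - S₁ ω)) ∂P
        = -p * ((∫ ω, M ω ∂Q) - ∫ ω, S₁ ω ∂Q) := by
      rw [← transfer_integral hZmeas hZpos hZ, integral_const_mul, integral_sub hMint hS₁]
    have hE : ∫ ω, Real.exp (-p * (M ω - S₁ ω)) ∂P ≤ 1 + α := by
      have h4 : ∫ ω, (Real.exp (-p * (M ω - S₁ ω)) - 1) ∂P
          = (∫ ω, Real.exp (-p * (M ω - S₁ ω)) ∂P) - 1 := by
        rw [integral_sub hexp (integrable_const 1), integral_const, probReal_univ]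
        simp
      linarith [hcon, h4.ge, h4.le]
    have hrhs_eq : ∫ ω, (t * Real.exp (-p * (M ω - S₁ ω)) + Z ω * Real.log (Z ω)
        - Z ω * Real.log t - Z ω) ∂P
        = t * (∫ ω, Real.exp (-p * (M ω - S₁ ω)) ∂P) + H - Real.log t - 1 := by
      have iA : Integrable (fun ω => t * Real.exp (-p * (M ω - S₁ ω))) P := hexp.const_mul t
      have iC : Integrable (fun ω => Z ω * Real.log t) P := hZint.mul_const _
      have iAB : Integrable (fun ω => t * Real.exp (-p * (M ω - S₁ ω))
          + Z ω * Real.log (Z ω)) P := iA.add hZlogint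
      have iABC : Integrable (fun ω => t * Real.exp (-p * (M ω - S₁ ω))
          + Z ω * Real.log (Z ω) - Z ω * Real.log t) P := iAB.sub iC
      rw [integral_sub iABC hZint, integral_sub iAB iC, integral_add iA hZlogint,
        integral_const_mul, integral_mul_const, hZone, hH]
      ring
    rw [hlhs_eq, hrhs_eq] at hint_le
    have htE : t * (∫ ω, Real.exp (-p * (M ω - S₁ ω)) ∂P) ≤ 1 := by
      have := mul_le_mul_of_nonneg_left hE ht.le
      rw [htdef] at this ⊢
      calc (1/(1+α)) * (∫ ω, Real.exp (-p * (M ω - S₁ ω)) ∂P) ≤ (1/(1+α)) * (1+α) := this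
        _ = 1 := by field_simp
    rw [hlogt] at hint_le
    have key : -p * ((∫ ω, M ω ∂Q) - ∫ ω, S₁ ω ∂Q) ≤ H + Real.log (1+α) := by linarith
    rw [htarget]
    have h5 : (∫ ω, S₁ ω ∂Q) - (∫ ω, M ω ∂Q) ≤ (H + Real.log (1+α)) / p := by
      rw [le_div_iff₀ hp]
      linarith [key]
    have e1 : (1/p) * Real.log (1+α) = Real.log (1+α) / p := by ring
    have e2 : (1/p) * H = H / p := by ring
    have e3 : (H + Real.log (1+α))/p = H/p + Real.log (1+α)/p := by ring
    linarith
  exact le_antisymm (csInf_le ⟨target, hlb⟩ hmem) (le_csInf ⟨target, hmem⟩ hlb)
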